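/- Let A = (E, {M_k}_{k∈O}) be a quantum algorithm on a d-dimensional space, and let ε ≥ 0, δ ≥ 0, and 0 ≤ η ≤ 1. Then A is (ε,δ)-differentially private within η if and only if for every subset S ⊆ O, δ ≥ η·λ_max(M_S) − (e^ε + η − 1)·λ_min(M_S), where M_S = ∑_{k∈S} E†(M_k). -/

import Mathlib

open Matrix BigOperators
open scoped ComplexOrder

namespace QDP

variable {n : Type*} [Fintype n] [DecidableEq n]

/-- Trace distance `D(ρ,σ) = (1/2) tr |ρ - σ|`, where `|A| = sqrt (Aᴴ A)`. -/
noncomputable def traceDist (ρ σ : Matrix n n ℂ) : ℝ :=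
  (1 / 2 : ℝ) * ((((Matrix.posSemidef_conjTranspose_mul_self (ρ - σ)).1.eigenvectorUnitary : Matrix n n ℂ) * diagonal (((↑) : ℝ → ℂ) ∘ (√·) ∘ (Matrix.posSemidef_conjTranspose_mul_self (ρ - σ)).1.eigenvalues) * (star (Matrix.posSemidef_conjTranspose_mul_self (ρ - σ)).1.eigenvectorUnitary : Matrix n n ℂ)).trace).re

/-- A density matrix: positive semidefinite with trace one. -/
def IsDensity (ρ : Matrix n n ℂ) : Prop := ρ.PosSemidef ∧ ρ.trace = 1

/-- The largest eigenvalue of a (Hermitian) matrix. -/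
noncomputable def lamMax (M : Matrix n n ℂ) : ℝ :=
  if h : M.IsHermitian then ⨆ i, h.eigenvalues i else 0

/-- The smallest eigenvalue of a (Hermitian) matrix. -/
noncomputable def lamMin (M : Matrix n n ℂ) : ℝ :=
  if h : M.IsHermitian then ⨅ i, h.eigenvalues i else 0

/-- Application of a quantum channel given by Kraus matrices. -/
noncomputable def applyChan {ι : Type*} [Fintype ι] (E : ι → Matrix n n ℂ)
    (ρ : Matrix n n ℂ) : Matrix n n ℂ := ∑ j, E j * ρ * (E j)ᴴ

/-- The dual of a quantum channel given by Kraus matrices. -/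
noncomputable def dualChan {ι : Type*} [Fintype ι] (E : ι → Matrix n n ℂ)
    (M : Matrix n n ℂ) : Matrix n n ℂ := ∑ j, (E j)ᴴ * M * E j

/-- `(ε,δ)`-differential privacy within `η` of the quantum algorithm `(E, M)`. -/
def IsDP {ι : Type*} [Fintype ι] {O : Type*} [Fintype O]
    (E : ι → Matrix n n ℂ) (M : O → Matrix n n ℂ) (ε δ η : ℝ) : Prop :=
  ∀ ρ σ : Matrix n n ℂ, IsDensity ρ → IsDensity σ → traceDist ρ σ ≤ η →
    ∀ S : Finset O,
      (∑ k ∈ S, (M k * applyChan E ρ).trace).re ≤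
        Real.exp ε * (∑ k ∈ S, (M k * applyChan E σ).trace).re + δ

/-- Rank-one projection `|ψ⟩⟨ψ|`. -/
noncomputable def proj (ψ : n → ℂ) : Matrix n n ℂ := vecMulVec ψ (star ψ)

end QDP

section Aux
open QDP

variable {n : Type*} [Fintype n] [DecidableEq n]

lemma diag_nonneg' {P : Matrix n n ℂ} (hP : P.PosSemidef) (i : n) : 0 ≤ P i i := by
  have := hP.dotProduct_mulVec_nonneg (Pi.single i 1)
  simpa [Matrix.mulVec_single, dotProduct, Pi.single_apply] using this

lemma re_trace_nonneg {P : Matrix n n ℂ} (hP : P.PosSemidef) : 0 ≤ P.trace.re := by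
  have h : (0:ℂ) ≤ P.trace := Finset.sum_nonneg fun i _ => diag_nonneg' hP i
  exact (Complex.le_def.mp h).1

open scoped MatrixOrder in
lemma re_trace_mul_nonneg {P Q : Matrix n n ℂ} (hP : P.PosSemidef) (hQ : Q.PosSemidef) :
    0 ≤ ((P * Q).trace).re := by
  have h1 : P * Q = CFC.sqrt P * (CFC.sqrt P * Q) := by
    rw [← Matrix.mul_assoc, CFC.sqrt_mul_sqrt_self P hP.nonneg]
  rw [h1, Matrix.trace_mul_comm]
  have h2 : CFC.sqrt P * Q * CFC.sqrt P = CFC.sqrt P * Q * (CFC.sqrt P)ᴴ := by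
    rw [(CFC.sqrt_nonneg P).posSemidef.1]
  rw [h2]
  exact re_trace_nonneg (hQ.mul_mul_conjTranspose_same (CFC.sqrt P))

lemma conj_diag_posSemidef {H : Matrix n n ℂ} (hH : H.IsHermitian) (f : n → ℝ)
    (hf : ∀ i, 0 ≤ f i) :
    (((hH.eigenvectorUnitary : Matrix n n ℂ)) * diagonal (fun i => (f i : ℂ)) *
      (star (hH.eigenvectorUnitary : Matrix n n ℂ))).PosSemidef := by
  rw [Matrix.star_eq_conjTranspose]
  refine Matrix.PosSemidef.mul_mul_conjTranspose_same ?_ _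
  refine Matrix.posSemidef_diagonal_iff.mpr fun i => ?_
  exact_mod_cast Complex.zero_le_real.mpr (hf i)

lemma conj_diag_trace {H : Matrix n n ℂ} (hH : H.IsHermitian) (f : n → ℂ) :
    (((hH.eigenvectorUnitary : Matrix n n ℂ)) * diagonal f *
      (star (hH.eigenvectorUnitary : Matrix n n ℂ))).trace = ∑ i, f i := by
  rw [Matrix.trace_mul_comm, ← Matrix.mul_assoc, Unitary.coe_star_mul_self, Matrix.one_mul,
    Matrix.trace_diagonal]

lemma smul_one_sub_spectral {H : Matrix n n ℂ} (hH : H.IsHermitian) (c : ℝ) :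
    (c : ℂ) • (1 : Matrix n n ℂ) - H =
      ((hH.eigenvectorUnitary : Matrix n n ℂ)) * diagonal (fun i => ((c - hH.eigenvalues i : ℝ) : ℂ)) *
      (star (hH.eigenvectorUnitary : Matrix n n ℂ)) := by
  have hU : ((hH.eigenvectorUnitary : Matrix n n ℂ)) * (star (hH.eigenvectorUnitary : Matrix n n ℂ)) = 1 :=
    Unitary.coe_mul_star_self _
  have h1 : diagonal (fun _ : n => (c : ℂ)) = (c:ℂ) • (1 : Matrix n n ℂ) := by
    ext i j
    by_cases h : i = j <;> simp [Matrix.diagonal_apply, Matrix.one_apply, h]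
  have h2 : ((hH.eigenvectorUnitary : Matrix n n ℂ)) * diagonal (fun _ : n => (c : ℂ)) *
      (star (hH.eigenvectorUnitary : Matrix n n ℂ)) = (c : ℂ) • (1 : Matrix n n ℂ) := by
    rw [h1, Matrix.mul_smul, Matrix.mul_one, Matrix.smul_mul, hU]
  have key : ((hH.eigenvectorUnitary : Matrix n n ℂ)) * diagonal (fun _ : n => (c : ℂ)) *
      (star (hH.eigenvectorUnitary : Matrix n n ℂ)) -
      ((hH.eigenvectorUnitary : Matrix n n ℂ)) * diagonal (RCLike.ofReal ∘ hH.eigenvalues) *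
      (star (hH.eigenvectorUnitary : Matrix n n ℂ)) =
      ((hH.eigenvectorUnitary : Matrix n n ℂ)) * diagonal (fun i => ((c - hH.eigenvalues i : ℝ) : ℂ)) *
      (star (hH.eigenvectorUnitary : Matrix n n ℂ)) := by
    rw [← Matrix.sub_mul, ← Matrix.mul_sub, Matrix.diagonal_sub]
    congr 2
    ext i
    push_cast
    simp
  rw [← h2, ← key]
  congr 1
  exact hH.spectral_theorem


lemma sub_smul_one_spectral {H : Matrix n n ℂ} (hH : H.IsHermitian) (c : ℝ) :
    H - (c : ℂ) • (1 : Matrix n n ℂ) =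
      ((hH.eigenvectorUnitary : Matrix n n ℂ)) * diagonal (fun i => ((hH.eigenvalues i - c : ℝ) : ℂ)) *
      (star (hH.eigenvectorUnitary : Matrix n n ℂ)) := by
  have h := smul_one_sub_spectral hH c
  have h2 : H - (c : ℂ) • (1 : Matrix n n ℂ) = -((c : ℂ) • (1 : Matrix n n ℂ) - H) :=
    (neg_sub _ _).symm
  rw [h2, h,
    show (fun i => ((hH.eigenvalues i - c : ℝ) : ℂ)) = fun i => -(((c - hH.eigenvalues i : ℝ)) : ℂ)
      by funext i; push_cast; ring,
    ← Matrix.diagonal_neg, Matrix.mul_neg, Matrix.neg_mul]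

section NE
variable [Nonempty n]

lemma eigenvalue_le_lamMax {H : Matrix n n ℂ} (hH : H.IsHermitian) (i : n) :
    hH.eigenvalues i ≤ lamMax H := by
  rw [lamMax, dif_pos hH]
  exact le_ciSup (Set.Finite.bddAbove (Set.finite_range _)) i

lemma lamMin_le_eigenvalue {H : Matrix n n ℂ} (hH : H.IsHermitian) (i : n) :
    lamMin H ≤ hH.eigenvalues i := by
  rw [lamMin, dif_pos hH]
  exact ciInf_le (Set.Finite.bddBelow (Set.finite_range _)) i

lemma exists_lamMax {H : Matrix n n ℂ} (hH : H.IsHermitian) :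
    ∃ i, hH.eigenvalues i = lamMax H := by
  obtain ⟨i, hi⟩ := Finite.exists_max hH.eigenvalues
  exact ⟨i, le_antisymm (eigenvalue_le_lamMax hH i)
    (by rw [lamMax, dif_pos hH]; exact ciSup_le hi)⟩

lemma exists_lamMin {H : Matrix n n ℂ} (hH : H.IsHermitian) :
    ∃ i, hH.eigenvalues i = lamMin H := by
  obtain ⟨i, hi⟩ := Finite.exists_min hH.eigenvalues
  exact ⟨i, le_antisymm (by rw [lamMin, dif_pos hH]; exact le_ciInf hi)
    (lamMin_le_eigenvalue hH i)⟩

lemma lamMin_le_lamMax {H : Matrix n n ℂ} (hH : H.IsHermitian) :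
    lamMin H ≤ lamMax H := by
  obtain ⟨i, hi⟩ := exists_lamMax hH
  exact hi ▸ lamMin_le_eigenvalue hH i

lemma lamMin_nonneg {H : Matrix n n ℂ} (hH : H.PosSemidef) : 0 ≤ lamMin H := by
  obtain ⟨i, hi⟩ := exists_lamMin hH.1
  exact hi ▸ hH.eigenvalues_nonneg i

lemma re_trace_mul_le_lamMax {H P : Matrix n n ℂ} (hH : H.IsHermitian) (hP : P.PosSemidef) :
    ((H * P).trace).re ≤ lamMax H * P.trace.re := by
  have hpos : ((lamMax H : ℂ) • (1 : Matrix n n ℂ) - H).PosSemidef := by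
    rw [smul_one_sub_spectral hH (lamMax H)]
    exact conj_diag_posSemidef hH _ fun i => sub_nonneg.2 (eigenvalue_le_lamMax hH i)
  have h0 := re_trace_mul_nonneg hpos hP
  have hexp : ((lamMax H : ℂ) • (1 : Matrix n n ℂ) - H) * P
      = (lamMax H : ℂ) • P - H * P := by
    rw [Matrix.sub_mul, Matrix.smul_mul, Matrix.one_mul]
  rw [hexp, Matrix.trace_sub, Matrix.trace_smul] at h0
  simp only [Complex.sub_re, Complex.smul_re, Complex.ofReal_re, smul_eq_mul] at h0 ⊢
  have : ((lamMax H : ℂ) • P.trace).re = lamMax H * P.trace.re := by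
    simp [Complex.smul_re]
  linarith [h0, this ▸ h0]

lemma lamMin_mul_le_re_trace {H P : Matrix n n ℂ} (hH : H.IsHermitian) (hP : P.PosSemidef) :
    lamMin H * P.trace.re ≤ ((H * P).trace).re := by
  have hpos : (H - (lamMin H : ℂ) • (1 : Matrix n n ℂ)).PosSemidef := by
    rw [sub_smul_one_spectral hH (lamMin H)]
    exact conj_diag_posSemidef hH _ fun i => sub_nonneg.2 (lamMin_le_eigenvalue hH i)
  have h0 := re_trace_mul_nonneg hpos hP
  have hexp : (H - (lamMin H : ℂ) • (1 : Matrix n n ℂ)) * P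
      = H * P - (lamMin H : ℂ) • P := by
    rw [Matrix.sub_mul, Matrix.smul_mul, Matrix.one_mul]
  rw [hexp, Matrix.trace_sub, Matrix.trace_smul] at h0
  have : ((lamMin H : ℂ) • P.trace).re = lamMin H * P.trace.re := by
    simp [Complex.smul_re]
  simp only [Complex.sub_re] at h0
  linarith [this ▸ h0]

end NE

lemma posSemidef_sum {α : Type*} (s : Finset α) (f : α → Matrix n n ℂ)
    (h : ∀ i ∈ s, (f i).PosSemidef) : (∑ i ∈ s, f i).PosSemidef :=
  Finset.sum_induction f _ (fun _ _ ha hb => ha.add hb) Matrix.PosSemidef.zero h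

lemma dual_posSemidef {ι : Type*} [Fintype ι] (E : ι → Matrix n n ℂ)
    {M : Matrix n n ℂ} (hM : M.PosSemidef) : (dualChan E M).PosSemidef :=
  posSemidef_sum _ _ fun j _ => hM.conjTranspose_mul_mul_same (E j)

lemma trace_sum_eq {ι O : Type*} [Fintype ι] [Fintype O] (E : ι → Matrix n n ℂ)
    (M : O → Matrix n n ℂ) (S : Finset O) (ρ : Matrix n n ℂ) :
    ∑ k ∈ S, (M k * applyChan E ρ).trace = ((∑ k ∈ S, dualChan E (M k)) * ρ).trace := by
  rw [Finset.sum_mul, Matrix.trace_sum]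
  refine Finset.sum_congr rfl fun k _ => ?_
  rw [applyChan, dualChan, Finset.mul_sum, Finset.sum_mul, Matrix.trace_sum, Matrix.trace_sum]
  refine Finset.sum_congr rfl fun j _ => ?_
  simp only [← Matrix.mul_assoc]
  rw [Matrix.trace_mul_cycle]
  congr 1
  simp only [Matrix.mul_assoc]



lemma vecMulVec_mulVec' (a b x : n → ℂ) :
    vecMulVec a b *ᵥ x = (b ⬝ᵥ x) • a := by
  funext i
  simp [Matrix.mulVec, Matrix.vecMulVec_apply, dotProduct, Finset.mul_sum, mul_assoc,
    mul_comm, mul_left_comm]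

lemma mul_vecMulVec (H : Matrix n n ℂ) (a b : n → ℂ) :
    H * vecMulVec a b = vecMulVec (H *ᵥ a) b := by
  ext i j
  simp [Matrix.mul_apply, Matrix.vecMulVec_apply, Matrix.mulVec, dotProduct,
    Finset.sum_mul, mul_assoc]

lemma vecMulVec_mul_vecMulVec (a b c e : n → ℂ) :
    vecMulVec a b * vecMulVec c e = (b ⬝ᵥ c) • vecMulVec a e := by
  ext i j
  simp [Matrix.mul_apply, Matrix.vecMulVec_apply, dotProduct, Finset.sum_mul,
    Finset.mul_sum]
  refine Finset.sum_congr rfl fun k _ => ?_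
  ring

lemma trace_vecMulVec (a b : n → ℂ) : (vecMulVec a b).trace = b ⬝ᵥ a := by
  simp [Matrix.trace, Matrix.diag, Matrix.vecMulVec_apply, dotProduct, mul_comm]

lemma proj_posSemidef (ψ : n → ℂ) : (QDP.proj ψ).PosSemidef := by
  refine Matrix.PosSemidef.of_dotProduct_mulVec_nonneg ?_ ?_
  · ext i j
    simp [QDP.proj, Matrix.conjTranspose_apply, Matrix.vecMulVec_apply, mul_comm]
  · intro x
    rw [QDP.proj, vecMulVec_mulVec', dotProduct_smul]
    have h : star x ⬝ᵥ ψ = star (star ψ ⬝ᵥ x) := by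
      simp only [dotProduct, star_sum, star_mul', star_star, Pi.star_apply]
      exact Finset.sum_congr rfl fun k _ => mul_comm _ _
    rw [smul_eq_mul, h]
    exact mul_star_self_nonneg _

lemma trace_mul_proj (H : Matrix n n ℂ) (ψ : n → ℂ) :
    (H * QDP.proj ψ).trace = star ψ ⬝ᵥ (H *ᵥ ψ) := by
  rw [QDP.proj, _root_.mul_vecMulVec, _root_.trace_vecMulVec, dotProduct_comm]

lemma trace_proj (ψ : n → ℂ) : (QDP.proj ψ).trace = star ψ ⬝ᵥ ψ := by
  rw [QDP.proj, _root_.trace_vecMulVec, dotProduct_comm]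

lemma smul_posSemidef {P : Matrix n n ℂ} {c : ℝ} (hc : 0 ≤ c) (hP : P.PosSemidef) :
    ((c : ℂ) • P).PosSemidef := by
  refine Matrix.PosSemidef.of_dotProduct_mulVec_nonneg ?_ ?_
  · show ((c : ℂ) • P)ᴴ = (c : ℂ) • P
    rw [Matrix.conjTranspose_smul, hP.1.eq, Complex.star_def, Complex.conj_ofReal]
  · intro x
    rw [Matrix.smul_mulVec, dotProduct_smul, smul_eq_mul]
    exact mul_nonneg (Complex.zero_le_real.mpr hc) (hP.dotProduct_mulVec_nonneg x)

lemma eigvec_dotProduct {H : Matrix n n ℂ} (hH : H.IsHermitian) (i j : n) :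
    star ⇑(hH.eigenvectorBasis i) ⬝ᵥ ⇑(hH.eigenvectorBasis j) = if i = j then 1 else 0 := by
  have h := hH.eigenvectorBasis.orthonormal
  rw [orthonormal_iff_ite] at h
  have := h i j
  rwa [EuclideanSpace.inner_eq_star_dotProduct, dotProduct_comm] at this



open scoped MatrixOrder in
lemma traceDist_of_sq {ρ σ B : Matrix n n ℂ} (hB : B.PosSemidef)
    (h : B ^ 2 = (ρ - σ)ᴴ * (ρ - σ)) : traceDist ρ σ = (1/2 : ℝ) * B.trace.re := by
  have hA := Matrix.posSemidef_conjTranspose_mul_self (ρ - σ)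
  have hT : ((hA.1.eigenvectorUnitary : Matrix n n ℂ) * diagonal (((↑) : ℝ → ℂ) ∘ (√·) ∘
      hA.1.eigenvalues) * (star hA.1.eigenvectorUnitary : Matrix n n ℂ)) = B := by
    have h1 : cfc Real.sqrt ((ρ - σ)ᴴ * (ρ - σ)) = ((hA.1.eigenvectorUnitary : Matrix n n ℂ) *
        diagonal (((↑) : ℝ → ℂ) ∘ (√·) ∘ hA.1.eigenvalues) *
        (star hA.1.eigenvectorUnitary : Matrix n n ℂ)) := by
      rw [hA.1.cfc_eq]; rfl
    rw [← h1, ← cfcₙ_eq_cfc, ← CFC.sqrt_eq_real_sqrt _ hA.nonneg]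
    exact CFC.sqrt_unique (by rw [← pow_two, h]) hB.nonneg
  rw [traceDist, hT]

lemma conj_diag_mul {H : Matrix n n ℂ} (hH : H.IsHermitian) (f g : n → ℂ) :
    ((hH.eigenvectorUnitary : Matrix n n ℂ) * diagonal f * (star (hH.eigenvectorUnitary : Matrix n n ℂ))) *
    ((hH.eigenvectorUnitary : Matrix n n ℂ) * diagonal g * (star (hH.eigenvectorUnitary : Matrix n n ℂ)))
      = (hH.eigenvectorUnitary : Matrix n n ℂ) * diagonal (fun i => f i * g i) *
        (star (hH.eigenvectorUnitary : Matrix n n ℂ)) := by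
  have hU : (star (hH.eigenvectorUnitary : Matrix n n ℂ)) * (hH.eigenvectorUnitary : Matrix n n ℂ) = 1 :=
    Unitary.coe_star_mul_self _
  have hfg : diagonal f * diagonal g = diagonal (fun i => f i * g i) := by
    rw [Matrix.diagonal_mul_diagonal]
  simp only [Matrix.mul_assoc]
  rw [← Matrix.mul_assoc (star (hH.eigenvectorUnitary : Matrix n n ℂ)), hU, Matrix.one_mul,
    ← Matrix.mul_assoc (diagonal f), hfg]

lemma re_sum_ofReal {α : Type*} (s : Finset α) (f : α → ℝ) :
    ((∑ i ∈ s, (f i : ℂ)).re) = ∑ i ∈ s, f i := by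
  rw [← Complex.ofReal_sum]
  exact Complex.ofReal_re _

section Suff
variable [Nonempty n]

lemma suff_bound {H ρ σ : Matrix n n ℂ} (hH : H.IsHermitian)
    (hρ : IsDensity ρ) (hσ : IsDensity σ) :
    ((H * ρ).trace).re - ((H * σ).trace).re ≤ (lamMax H - lamMin H) * traceDist ρ σ := by
  have hA : (ρ - σ).IsHermitian := hρ.1.1.sub hσ.1.1
  set μ := hA.eigenvalues with hμ
  set U := (hA.eigenvectorUnitary : Matrix n n ℂ) with hUdef
  set Ap := U * diagonal (fun i => ((max (μ i) 0 : ℝ) : ℂ)) * star U with hApdef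
  set Am := U * diagonal (fun i => ((max (-μ i) 0 : ℝ) : ℂ)) * star U with hAmdef
  set B := U * diagonal (fun i => ((|μ i| : ℝ) : ℂ)) * star U with hBdef
  have hPp : Ap.PosSemidef := conj_diag_posSemidef hA _ fun i => le_max_right _ _
  have hPm : Am.PosSemidef := conj_diag_posSemidef hA _ fun i => le_max_right _ _
  have hPB : B.PosSemidef := conj_diag_posSemidef hA _ fun i => abs_nonneg _
  have hAspec : ρ - σ = U * diagonal (fun i => ((μ i : ℝ) : ℂ)) * star U := hA.spectral_theorem
  -- B^2 = (ρ-σ)ᴴ (ρ-σ)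
  have hsq : B ^ 2 = (ρ - σ)ᴴ * (ρ - σ) := by
    rw [hA.eq, pow_two, hBdef, conj_diag_mul hA]
    conv_rhs => rw [hAspec]
    rw [conj_diag_mul hA]
    rw [show (fun i => ((|μ i| : ℝ) : ℂ) * ((|μ i| : ℝ) : ℂ)) = (fun i => ((μ i : ℝ) : ℂ) * ((μ i : ℝ) : ℂ)) from
      funext fun i => by rw [← Complex.ofReal_mul, ← Complex.ofReal_mul, abs_mul_abs_self]]
  have hD : traceDist ρ σ = (1/2 : ℝ) * B.trace.re := traceDist_of_sq hPB hsq
  have htrB : B.trace.re = ∑ i, |μ i| := by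
    rw [hBdef, conj_diag_trace hA, re_sum_ofReal]
  have htrp : Ap.trace.re = ∑ i, max (μ i) 0 := by
    rw [hApdef, conj_diag_trace hA, re_sum_ofReal]
  have htrm : Am.trace.re = ∑ i, max (-μ i) 0 := by
    rw [hAmdef, conj_diag_trace hA, re_sum_ofReal]
  have htr0 : ∑ i, μ i = 0 := by
    have h1 : (ρ - σ).trace = 0 := by
      rw [Matrix.trace_sub, hρ.2, hσ.2, sub_self]
    have h2 : (ρ - σ).trace = ∑ i, (μ i : ℂ) := by
      conv_lhs => rw [hAspec]
      rw [conj_diag_trace hA]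
    have h4 : ∑ i, (μ i : ℂ) = 0 := h2 ▸ h1
    have h3 := congrArg Complex.re h4
    rwa [re_sum_ofReal, Complex.zero_re] at h3
  have hsplit : ρ - σ = Ap - Am := by
    conv_lhs => rw [hAspec]
    rw [hApdef, hAmdef, ← Matrix.sub_mul, ← Matrix.mul_sub, Matrix.diagonal_sub]
    rw [show (fun i => ((max (μ i) 0 : ℝ) : ℂ) - ((max (-μ i) 0 : ℝ) : ℂ)) = (fun i => ((μ i : ℝ) : ℂ)) from
      funext fun i => by rw [← Complex.ofReal_sub, max_zero_sub_max_neg_zero_eq_self]]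
  have hApD : Ap.trace.re = traceDist ρ σ := by
    rw [htrp, hD, htrB]
    have : ∑ i, max (μ i) 0 = (1/2 : ℝ) * (∑ i, |μ i| + ∑ i, μ i) := by
      rw [← Finset.sum_add_distrib, Finset.mul_sum]
      refine Finset.sum_congr rfl fun i _ => ?_
      rcases le_or_gt (μ i) 0 with h | h
      · rw [max_eq_right h, abs_of_nonpos h]; ring
      · rw [max_eq_left h.le, abs_of_pos h]; ring
    rw [this, htr0]
    ring
  have hAmD : Am.trace.re = traceDist ρ σ := by
    rw [htrm, hD, htrB]
    have : ∑ i, max (-μ i) 0 = (1/2 : ℝ) * (∑ i, |μ i| - ∑ i, μ i) := by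
      rw [← Finset.sum_sub_distrib, Finset.mul_sum]
      refine Finset.sum_congr rfl fun i _ => ?_
      rcases le_or_gt (μ i) 0 with h | h
      · rw [max_eq_left (by linarith), abs_of_nonpos h]; ring
      · rw [max_eq_right (by linarith), abs_of_pos h]; ring
    rw [this, htr0]
    ring
  have hdiff : ((H * ρ).trace).re - ((H * σ).trace).re
      = ((H * Ap).trace).re - ((H * Am).trace).re := by
    have h1 : H * ρ - H * σ = H * Ap - H * Am := by
      rw [← Matrix.mul_sub, ← Matrix.mul_sub, ← hsplit]
    have := congrArg (fun X => (Matrix.trace X).re) h1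
    simpa [Matrix.trace_sub, Complex.sub_re] using this
  have h2 := re_trace_mul_le_lamMax hH hPp
  have h3 := lamMin_mul_le_re_trace hH hPm
  rw [hApD] at h2
  rw [hAmD] at h3
  rw [hdiff]
  linarith
end Suff


end Aux

open QDP in
/-- Theorem (sufficient and necessary condition for `(ε,δ)`-differential privacy). -/
theorem dp_iff_delta_bound {d : ℕ} (hd : 1 ≤ d) {ι O : Type} [Fintype ι] [Fintype O]
    (E : ι → Matrix (Fin d) (Fin d) ℂ) (hE : ∑ j, (E j)ᴴ * E j = 1)
    (M : O → Matrix (Fin d) (Fin d) ℂ) (hMpos : ∀ k, (M k).PosSemidef)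
    (hMsum : ∑ k, M k = 1)
    (ε δ η : ℝ) (hε : 0 ≤ ε) (hδ : 0 ≤ δ) (hη0 : 0 ≤ η) (hη1 : η ≤ 1) :
    IsDP E M ε δ η ↔
      ∀ S : Finset O,
        η * lamMax (∑ k ∈ S, dualChan E (M k)) -
            (Real.exp ε + η - 1) * lamMin (∑ k ∈ S, dualChan E (M k)) ≤ δ := by
  have hne : Nonempty (Fin d) := ⟨⟨0, hd⟩⟩
  have he : 1 ≤ Real.exp ε := by
    rw [← Real.exp_zero]; exact Real.exp_le_exp.mpr hε
  constructor
  · -- necessity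
    intro hDP S
    set H := ∑ k ∈ S, dualChan E (M k) with hHdef
    have hpsd : H.PosSemidef := posSemidef_sum _ _ fun k _ => dual_posSemidef E (hMpos k)
    have hH : H.IsHermitian := hpsd.1
    obtain ⟨i0, hi0⟩ := exists_lamMax hH
    obtain ⟨i1, hi1⟩ := exists_lamMin hH
    by_cases hcase : lamMax H = lamMin H
    · have h0 : 0 ≤ lamMin H := lamMin_nonneg hpsd
      rw [hcase]
      nlinarith [mul_nonneg (sub_nonneg.2 he) h0]
    · have hne01 : i0 ≠ i1 := fun h => hcase (by rw [← hi0, ← hi1, h])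
      set u := ⇑(hH.eigenvectorBasis i0) with hudef
      set v := ⇑(hH.eigenvectorBasis i1) with hvdef
      have huu : star u ⬝ᵥ u = 1 := by simpa using eigvec_dotProduct hH i0 i0
      have hvv : star v ⬝ᵥ v = 1 := by simpa using eigvec_dotProduct hH i1 i1
      have huv : star u ⬝ᵥ v = 0 := by simpa [hne01] using eigvec_dotProduct hH i0 i1
      have hvu : star v ⬝ᵥ u = 0 := by simpa [Ne.symm hne01] using eigvec_dotProduct hH i1 i0
      set ρ : Matrix (Fin d) (Fin d) ℂ := (η : ℂ) • proj u + ((1 - η : ℝ) : ℂ) • proj v with hρdef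
      set σ : Matrix (Fin d) (Fin d) ℂ := proj v with hσdef
      have hσden : IsDensity σ := ⟨proj_posSemidef v, by rw [hσdef, trace_proj, hvv]⟩
      have hρden : IsDensity ρ := by
        refine ⟨(smul_posSemidef hη0 (proj_posSemidef u)).add
          (smul_posSemidef (by linarith) (proj_posSemidef v)), ?_⟩
        rw [hρdef, Matrix.trace_add, Matrix.trace_smul, Matrix.trace_smul, trace_proj, trace_proj,
          huu, hvv]
        push_cast
        simp only [smul_eq_mul, mul_one]
        ring
      have hc : ((1 - η : ℝ) : ℂ) = 1 - (η : ℂ) := by push_cast; ring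
      have hdiffAB : ρ - σ = (η : ℂ) • proj u - (η : ℂ) • proj v := by
        rw [hρdef, hσdef, hc]
        module
      have hprojuu : proj u * proj u = proj u := by
        simp only [proj]
        rw [_root_.vecMulVec_mul_vecMulVec, huu, one_smul]
      have hprojvv : proj v * proj v = proj v := by
        simp only [proj]
        rw [_root_.vecMulVec_mul_vecMulVec, hvv, one_smul]
      have hprojuv : proj u * proj v = 0 := by
        simp only [proj]
        rw [_root_.vecMulVec_mul_vecMulVec, huv, zero_smul]
      have hprojvu : proj v * proj u = 0 := by
        simp only [proj]
        rw [_root_.vecMulVec_mul_vecMulVec, hvu, zero_smul]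
      set B := (η : ℂ) • (proj u + proj v) with hBdef
      have hBpsd : B.PosSemidef :=
        smul_posSemidef hη0 ((proj_posSemidef u).add (proj_posSemidef v))
      have hherm : (ρ - σ)ᴴ = ρ - σ := by
        rw [hdiffAB]
        simp only [Matrix.conjTranspose_sub, Matrix.conjTranspose_smul,
          (proj_posSemidef u).1.eq, (proj_posSemidef v).1.eq, Complex.star_def,
          Complex.conj_ofReal]
      have hsq : B ^ 2 = (ρ - σ)ᴴ * (ρ - σ) := by
        rw [hherm, hdiffAB, hBdef, pow_two]
        simp only [Matrix.smul_mul, Matrix.mul_smul, Matrix.add_mul, Matrix.mul_add,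
          Matrix.sub_mul, Matrix.mul_sub, hprojuu, hprojvv, hprojuv, hprojvu, smul_smul]
        simp only [smul_add, smul_sub, smul_zero]
        abel
      have hdist : traceDist ρ σ = η := by
        rw [traceDist_of_sq hBpsd hsq, hBdef, Matrix.trace_smul, Matrix.trace_add,
          trace_proj, trace_proj, huu, hvv]
        simp [smul_eq_mul]
        ring
      have happ := hDP ρ σ hρden hσden (le_of_eq hdist) S
      rw [trace_sum_eq E M S ρ, trace_sum_eq E M S σ, ← hHdef] at happ
      have hmv_u : H *ᵥ u = hH.eigenvalues i0 • u := hH.mulVec_eigenvectorBasis i0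
      have hmv_v : H *ᵥ v = hH.eigenvalues i1 • v := hH.mulVec_eigenvectorBasis i1
      have htru : (H * proj u).trace = ((lamMax H : ℝ) : ℂ) := by
        rw [trace_mul_proj, hmv_u, dotProduct_smul, huu, hi0]
        simp [Complex.real_smul]
      have htrv : (H * proj v).trace = ((lamMin H : ℝ) : ℂ) := by
        rw [trace_mul_proj, hmv_v, dotProduct_smul, hvv, hi1]
        simp [Complex.real_smul]
      have htrρ : ((H * ρ).trace).re = η * lamMax H + (1 - η) * lamMin H := by
        rw [hρdef, Matrix.mul_add, Matrix.mul_smul, Matrix.mul_smul, Matrix.trace_add,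
          Matrix.trace_smul, Matrix.trace_smul, htru, htrv]
        simp [smul_eq_mul]
      have htrσ : ((H * σ).trace).re = lamMin H := by
        rw [hσdef, htrv, Complex.ofReal_re]
      rw [htrρ, htrσ] at happ
      linarith


  · -- sufficiency
    intro hcond ρ σ hρ hσ hdist S
    have hpsd : (∑ k ∈ S, dualChan E (M k)).PosSemidef :=
      posSemidef_sum _ _ fun k _ => dual_posSemidef E (hMpos k)
    have hH : (∑ k ∈ S, dualChan E (M k)).IsHermitian := hpsd.1
    rw [trace_sum_eq E M S ρ, trace_sum_eq E M S σ]
    set H := ∑ k ∈ S, dualChan E (M k) with hHdef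
    have h1 := suff_bound hH hρ hσ
    have h2 := lamMin_mul_le_re_trace hH hσ.1
    have hσ1 : σ.trace.re = 1 := by rw [hσ.2]; simp
    rw [hσ1, mul_one] at h2
    have hb := hcond S
    have hlm : lamMin H ≤ lamMax H := lamMin_le_lamMax hH
    have p1 : (lamMax H - lamMin H) * traceDist ρ σ ≤ (lamMax H - lamMin H) * η :=
      mul_le_mul_of_nonneg_left hdist (by linarith)
    have p2 : (Real.exp ε - 1) * lamMin H ≤ (Real.exp ε - 1) * ((H * σ).trace).re :=
      mul_le_mul_of_nonneg_left h2 (by linarith)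
    linarith
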